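/- Let m = p(p+1)/2 and suppose all support points w of a random vector W ∈ ℝ^{p-1} satisfy that v((1,w^T)^T) lies in a fixed (m−1)-dimensional linear subspace V of ℝ^m. Let z be a unit vector orthogonal to V and Z the symmetric p×p matrix with vec(Z) = z. Then for every positive definite p×p matrix Σ* there exists ε > 0 such that Σ₁ = Σ* + εZ is positive definite, and (1,w^T) Σ₁ (1,w^T)^T = (1,w^T) Σ* (1,w^T)^T for all w in the support of W. -/

import Mathlib

open Matrix in
private lemma quad_eq_half (m : ℕ) (Z : Matrix (Fin m) (Fin m) ℝ) (hZ : Z.IsSymm) (x : Fin m → ℝ) :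
    dotProduct x (Z.mulVec x) =
      ∑ q : {q : Fin m × Fin m // q.1 ≤ q.2}, Z q.1.1 q.1.2 *
        (if q.1.1 = q.1.2 then x q.1.1 ^ 2 else 2 * x q.1.1 * x q.1.2) := by
  classical
  have hsym : ∀ i j, Z j i = Z i j := fun i j => by
    conv_lhs => rw [← hZ]; rw [Matrix.transpose_apply]
  have hL : dotProduct x (Z.mulVec x)
      = ∑ p : Fin m × Fin m, x p.1 * Z p.1 p.2 * x p.2 := by
    simp [dotProduct, Matrix.mulVec, Finset.sum_mul, Finset.mul_sum,
      ← Finset.sum_product', mul_assoc]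
  rw [hL]
  rw [← Finset.sum_filter_add_sum_filter_not Finset.univ (fun p : Fin m × Fin m => p.1 ≤ p.2)]
  have hswap : ∑ p ∈ Finset.univ.filter (fun p : Fin m × Fin m => ¬ p.1 ≤ p.2),
      x p.1 * Z p.1 p.2 * x p.2
      = ∑ p ∈ Finset.univ.filter (fun p : Fin m × Fin m => p.1 < p.2),
      x p.1 * Z p.1 p.2 * x p.2 := by
    apply Finset.sum_nbij' (fun p => (p.2, p.1)) (fun p => (p.2, p.1)) <;>
      simp_all [lt_iff_le_and_ne, ← not_le]
    intros; ring
  rw [hswap]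
  have hRHS : ∑ q : {q : Fin m × Fin m // q.1 ≤ q.2}, Z q.1.1 q.1.2 *
        (if q.1.1 = q.1.2 then x q.1.1 ^ 2 else 2 * x q.1.1 * x q.1.2)
      = ∑ p ∈ Finset.univ.filter (fun p : Fin m × Fin m => p.1 ≤ p.2),
        Z p.1 p.2 * (if p.1 = p.2 then x p.1 ^ 2 else 2 * x p.1 * x p.2) := by
    rw [Finset.sum_subtype (Finset.univ.filter (fun p : Fin m × Fin m => p.1 ≤ p.2))]
    simp
  rw [hRHS]
  have hlt : ∑ p ∈ Finset.univ.filter (fun p : Fin m × Fin m => p.1 < p.2),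
      x p.1 * Z p.1 p.2 * x p.2
      = ∑ p ∈ Finset.univ.filter (fun p : Fin m × Fin m => p.1 ≤ p.2),
        (if p.1 = p.2 then 0 else x p.1 * Z p.1 p.2 * x p.2) := by
    have : ∀ p : Fin m × Fin m, (if p.1 = p.2 then (0:ℝ) else x p.1 * Z p.1 p.2 * x p.2)
        = (if ¬ p.1 = p.2 then x p.1 * Z p.1 p.2 * x p.2 else 0) := by
      intro p; by_cases h : p.1 = p.2 <;> simp [h]
    simp_rw [this, ← Finset.sum_filter, Finset.filter_filter]
    apply Finset.sum_congr _ (fun _ _ => rfl)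
    apply Finset.filter_congr
    intro p _
    simp [lt_iff_le_and_ne, and_comm]
  rw [hlt, ← Finset.sum_add_distrib]
  apply Finset.sum_congr rfl
  intro p hp
  by_cases h : p.1 = p.2 <;> simp [h] <;> ring

private lemma quad_scale (m : ℕ) (B : Matrix (Fin m) (Fin m) ℝ) (r : ℝ) (u : Fin m → ℝ) :
    dotProduct (r • u) (B.mulVec (r • u))
      = r ^ 2 * dotProduct u (B.mulVec u) := by
  simp [Matrix.mulVec_smul, smul_dotProduct, dotProduct_smul, smul_eq_mul]
  ring

private lemma quad_continuous (m : ℕ) (B : Matrix (Fin m) (Fin m) ℝ) :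
    Continuous fun x : Fin m → ℝ => dotProduct x (B.mulVec x) := by
  simp only [dotProduct, Matrix.mulVec]
  fun_prop

private lemma posdef_perturb (m : ℕ) [NeZero m] (A Z : Matrix (Fin m) (Fin m) ℝ)
    (hA : A.PosDef) (hZ : Z.IsSymm) : ∃ ε > (0:ℝ), (A + ε • Z).PosDef := by
  classical
  have hSc : IsCompact (Metric.sphere (0 : Fin m → ℝ) 1) := isCompact_sphere 0 1
  have hSne : (Metric.sphere (0 : Fin m → ℝ) 1).Nonempty :=
    NormedSpace.sphere_nonempty.2 zero_le_one
  obtain ⟨x0, hx0S, hmin⟩ := hSc.exists_isMinOn hSne ((quad_continuous m A).continuousOn)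
  obtain ⟨x1, hx1S, hmax⟩ := hSc.exists_isMaxOn hSne
    (((quad_continuous m Z).abs).continuousOn)
  set c : ℝ := dotProduct x0 (A.mulVec x0) with hc
  set M : ℝ := |dotProduct x1 (Z.mulVec x1)| with hM
  have hx0ne : x0 ≠ 0 := by
    intro h; rw [h] at hx0S; simp at hx0S
  have hcpos : 0 < c := by
    have := hA.dotProduct_mulVec_pos hx0ne
    simpa using this
  have hMnn : 0 ≤ M := abs_nonneg _
  refine ⟨c / (2 * (M + 1)), by positivity, Matrix.PosDef.of_dotProduct_mulVec_pos ?_ ?_⟩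
  · have hZh : Z.IsHermitian := by
      rw [Matrix.IsHermitian, Matrix.conjTranspose_eq_transpose_of_trivial]; exact hZ
    show _ = _
    rw [Matrix.conjTranspose_add, Matrix.conjTranspose_smul, hA.1.eq]
    simp [hZ.eq]
  · intro x hx
    have hr : 0 < ‖x‖ := norm_pos_iff.2 hx
    set u : Fin m → ℝ := ‖x‖⁻¹ • x with hu
    have huS : u ∈ Metric.sphere (0 : Fin m → ℝ) 1 := by
      simp [hu, norm_smul, abs_of_pos (inv_pos.2 hr), inv_mul_cancel₀ hr.ne']
    have hxu : x = ‖x‖ • u := by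
      rw [hu, smul_smul, mul_inv_cancel₀ hr.ne', one_smul]
    have h1 : c ≤ dotProduct u (A.mulVec u) := hmin huS
    have h2 : |dotProduct u (Z.mulVec u)| ≤ M := hmax huS
    have key : 0 < dotProduct u (A.mulVec u)
        + (c / (2 * (M + 1))) * dotProduct u (Z.mulVec u) := by
      have h3 : -M ≤ dotProduct u (Z.mulVec u) := (abs_le.1 h2).1
      have epos : (0:ℝ) < c / (2 * (M + 1)) := by positivity
      have heq : c / (2 * (M + 1)) * (M + 1) = c / 2 := by
        field_simp
      nlinarith [mul_le_mul_of_nonneg_left h3 epos.le, heq, hcpos, h1, epos]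
    have hstar : star x = x := by
      funext i; simp
    rw [hstar, hxu]
    have : dotProduct (‖x‖ • u) ((A + (c / (2 * (M + 1))) • Z).mulVec (‖x‖ • u))
        = ‖x‖ ^ 2 * (dotProduct u (A.mulVec u)
          + (c / (2 * (M + 1))) * dotProduct u (Z.mulVec u)) := by
      rw [quad_scale]
      simp [Matrix.add_mulVec, Matrix.smul_mulVec, dotProduct_add,
        dotProduct_smul, smul_eq_mul]
    rw [this]
    positivity

/-- Non-identifiability construction: if all transformed support points lie in a
hyperplane V and Z is a symmetric matrix whose half-vectorization is a unit
vector orthogonal to V, then any positive definite Σ* can be perturbed to a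
different positive definite matrix with the same conditional variances. -/
theorem stmt_13 (n : ℕ) (Wsupp : Set (Fin n → ℝ))
    (V : Submodule ℝ ({q : Fin (n + 1) × Fin (n + 1) // q.1 ≤ q.2} → ℝ))
    (hVdim : Module.finrank ℝ V =
      Fintype.card {q : Fin (n + 1) × Fin (n + 1) // q.1 ≤ q.2} - 1)
    (hsupp : ∀ w ∈ Wsupp,
      (fun q : {q : Fin (n + 1) × Fin (n + 1) // q.1 ≤ q.2} =>
        if q.1.1 = q.1.2 then (Fin.cons (1 : ℝ) w : Fin (n + 1) → ℝ) q.1.1 ^ 2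
        else 2 * (Fin.cons (1 : ℝ) w : Fin (n + 1) → ℝ) q.1.1 *
          (Fin.cons (1 : ℝ) w : Fin (n + 1) → ℝ) q.1.2) ∈ V)
    (Z : Matrix (Fin (n + 1)) (Fin (n + 1)) ℝ) (hZ : Z.IsSymm)
    (hznorm : ∑ q : {q : Fin (n + 1) × Fin (n + 1) // q.1 ≤ q.2},
      (Z q.1.1 q.1.2) ^ 2 = 1)
    (horth : ∀ y ∈ V,
      ∑ q : {q : Fin (n + 1) × Fin (n + 1) // q.1 ≤ q.2},
        Z q.1.1 q.1.2 * y q = 0)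
    (Sstar : Matrix (Fin (n + 1)) (Fin (n + 1)) ℝ) (hpos : Sstar.PosDef) :
    ∃ ε > (0 : ℝ), (Sstar + ε • Z).PosDef ∧
      ∀ w ∈ Wsupp,
        dotProduct (Fin.cons (1 : ℝ) w)
            ((Sstar + ε • Z).mulVec (Fin.cons (1 : ℝ) w)) =
          dotProduct (Fin.cons (1 : ℝ) w)
            (Sstar.mulVec (Fin.cons (1 : ℝ) w)) := by
  obtain ⟨ε, hεpos, hεpd⟩ := posdef_perturb (n + 1) Sstar Z hpos hZ
  refine ⟨ε, hεpos, hεpd, ?_⟩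
  intro w hw
  set x : Fin (n + 1) → ℝ := Fin.cons 1 w with hx
  have hZx : dotProduct x (Z.mulVec x) = 0 := by
    rw [quad_eq_half (n + 1) Z hZ x]
    exact horth _ (hsupp w hw)
  rw [Matrix.add_mulVec, dotProduct_add, Matrix.smul_mulVec,
    dotProduct_smul, smul_eq_mul, hZx, mul_zero, add_zero]
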